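/- Let M₁, c₀, c₁, g₀ be positive constants and let y ≠ 0 be an element of a real Hilbert space H. Then there exist λ > 0 and a function a ∈ C¹[0, ∞) with a(t) > 0, a strictly decreasing, lim_{t→∞} a(t) = 0, and |a′(t)| ≤ a(t)³/4 for all t, such that: (i) M₁/‖y‖ ≤ λ; (ii) c₀(M₁ + a(t)) ≤ (λ/(2a(t)²))(a(t)² − 2|a′(t)|/a(t)) for all t ≥ 0; (iii) c₁ |a′(t)|/a(t) ≤ (a(t)²/(2λ))(a(t)² − 2|a′(t)|/a(t)) for all t ≥ 0; (iv) (λ/a(0)²) g₀ < 1. In particular, functions of the form a(t) = d/(c+t)^b with 0 < b ≤ 1/4, c ≥ 1 and d sufficiently large can be chosen. -/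

import Mathlib

open Filter Topology Set

lemma aux_hasDeriv (d t : ℝ) (ht : 0 < 1 + t) :
    HasDerivAt (fun s : ℝ => d / (1 + s) ^ (1/4 : ℝ)) (-(d / 4) / (1 + t) ^ (5/4 : ℝ)) t := by
  have h1 : HasDerivAt (fun s : ℝ => 1 + s) 1 t := (hasDerivAt_id t).const_add 1
  have hg : HasDerivAt (fun s : ℝ => (1 + s) ^ (1/4 : ℝ))
      (1 * (1/4 : ℝ) * (1 + t) ^ ((1/4 : ℝ) - 1)) t :=
    h1.rpow_const (Or.inl ht.ne')
  have hne : (1 + t) ^ (1/4 : ℝ) ≠ 0 := (Real.rpow_pos_of_pos ht _).ne'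
  have := (hasDerivAt_const t d).div hg hne
  refine HasDerivAt.congr_deriv this ?_
  symm
  rw [← Real.rpow_natCast ((1+t) ^ (1/4:ℝ)) 2, ← Real.rpow_mul ht.le]
  rw [show ((1/4:ℝ) - 1) = -(3/4) by norm_num,
    show ((1/4:ℝ) * ((2:ℕ):ℝ)) = 1/2 by push_cast; norm_num]
  rw [zero_mul, zero_sub, one_mul]
  rw [show -(d * (1/4 * (1+t) ^ (-(3/4):ℝ))) = -(d/4) * (1+t) ^ (-(3/4):ℝ) by ring]
  rw [div_eq_div_iff (by positivity) (by positivity), mul_assoc, ← Real.rpow_add ht]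
  norm_num

lemma auxL1 (d A : ℝ) (hd : 1 ≤ d) (hA : 1 ≤ A) : d/(4*A^5) ≤ (d/A)^3/4 := by
  have hA0 : (0:ℝ) < A := by linarith
  have hd0 : (0:ℝ) < d := by linarith
  rw [div_pow, div_div, div_le_div_iff₀ (by positivity) (by positivity)]
  have h1 : A^3 ≤ A^5 := pow_le_pow_right₀ (by linarith) (by norm_num)
  have h2 : d ≤ d^3 := le_self_pow₀ (by linarith) (by norm_num)
  nlinarith [mul_le_mul h2 h1 (by positivity) (by positivity)]

lemma auxL2 (c₀ M₁ lam d A : ℝ) (hd : 1 ≤ d) (hA : 1 ≤ A) (hc₀ : 0 < c₀)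
    (hlam0 : 0 < lam) (hlam : 4*c₀*(M₁+d) ≤ lam) :
    c₀*(M₁ + d/A) ≤ lam/(2*(d/A)^2) * ((d/A)^2 - 2*(d/(4*A^5))/(d/A)) := by
  have hA0 : (0:ℝ) < A := by linarith
  have hd0 : (0:ℝ) < d := by linarith
  have hR : lam/(2*(d/A)^2) * ((d/A)^2 - 2*(d/(4*A^5))/(d/A))
      = lam/2 - lam/(4*d^2*A^2) := by field_simp
  rw [hR]
  have h1 : lam/(4*d^2*A^2) ≤ lam/4 := by
    apply div_le_div_of_nonneg_left hlam0.le (by norm_num)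
    have h0 : (1:ℝ) ≤ d*A := by nlinarith
    nlinarith [mul_le_mul h0 h0 zero_le_one (by positivity : (0:ℝ) ≤ d*A)]
  have h2 : d/A ≤ d := div_le_self hd0.le hA
  have h3 : c₀*(M₁ + d/A) ≤ c₀*(M₁+d) := by nlinarith
  linarith

lemma auxL3 (c₁ lam d A : ℝ) (hd : 1 ≤ d) (hA : 1 ≤ A) (hlam0 : 0 < lam)
    (hcl : c₁ * lam ≤ d^4) :
    c₁ * (d/(4*A^5)) / (d/A) ≤ (d/A)^2/(2*lam) * ((d/A)^2 - 2*(d/(4*A^5))/(d/A)) := by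
  have hA0 : (0:ℝ) < A := by linarith
  have hd0 : (0:ℝ) < d := by linarith
  have hL : c₁ * (d/(4*A^5)) / (d/A) = c₁/(4*A^4) := by field_simp
  have hR : (d/A)^2/(2*lam) * ((d/A)^2 - 2*(d/(4*A^5))/(d/A))
      = (2*d^4*A^2 - d^2)/(4*lam*A^6) := by field_simp; ring
  rw [hL, hR, div_le_div_iff₀ (by positivity) (by positivity)]
  have h1 : c₁*lam*A^6 ≤ d^4*A^6 :=
    mul_le_mul_of_nonneg_right hcl (by positivity)
  have h0 : (1:ℝ) ≤ d*A := by nlinarith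
  have h2 : (1:ℝ) ≤ d^2*A^2 := by
    nlinarith [mul_le_mul h0 h0 zero_le_one (by positivity : (0:ℝ) ≤ d*A)]
  have h3 : d^2*A^4 ≤ d^4*A^6 := by nlinarith [sq_nonneg (d*A^2), pow_pos hd0 2, pow_pos hA0 4]
  nlinarith

lemma aux_choice (m M₁ c₀ c₁ g₀ : ℝ) (hm : 0 < m) (hM₁ : 0 < M₁) (hc₀ : 0 < c₀)
    (hc₁ : 0 < c₁) (hg₀ : 0 < g₀) :
    ∃ lam d : ℝ, 0 < lam ∧ 1 ≤ d ∧ m ≤ lam ∧ 4*c₀*(M₁+d) ≤ lam ∧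
      c₁*lam ≤ d^4 ∧ lam*g₀ < d^2 := by
  obtain ⟨L, hL⟩ : ∃ L : ℝ, L = m + 4*c₀*M₁ + 4*c₀ := ⟨_, rfl⟩
  obtain ⟨d, hd⟩ : ∃ d : ℝ, d = 1 + L*g₀ + c₁*L := ⟨_, rfl⟩
  obtain ⟨lam, hlam⟩ : ∃ lam : ℝ, lam = m + 4*c₀*(M₁+d) := ⟨_, rfl⟩
  have hL0 : 0 < L := by nlinarith [mul_pos hc₀ hM₁]
  have hd1 : 1 ≤ d := by nlinarith [mul_pos hL0 hg₀, mul_pos hc₁ hL0]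
  have hd0 : 0 < d := by linarith
  have hlam0 : 0 < lam := by nlinarith [mul_pos hc₀ (show (0:ℝ) < M₁ + d by linarith)]
  have hlamL : lam ≤ L*d := by
    have he : L*d - lam = (m + 4*c₀*M₁)*(d-1) := by rw [hlam, hL]; ring
    nlinarith [mul_nonneg (show (0:ℝ) ≤ m + 4*c₀*M₁ by nlinarith [mul_pos hc₀ hM₁])
      (show (0:ℝ) ≤ d-1 by linarith)]
  refine ⟨lam, d, hlam0, hd1, ?_, ?_, ?_, ?_⟩
  · nlinarith [mul_pos hc₀ (show (0:ℝ) < M₁ + d by linarith)]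
  · linarith
  · have h1 : c₁ * L ≤ d - 1 := by nlinarith [mul_pos hL0 hg₀]
    have h2 : c₁ * lam ≤ c₁ * (L*d) := by nlinarith
    have h4 : (c₁*L)*d ≤ (d-1)*d := by nlinarith
    have h5 : (d-1)*d ≤ d^4 := by nlinarith [pow_le_pow_right₀ hd1 (show 2 ≤ 4 by norm_num)]
    nlinarith
  · have h1 : L * g₀ < d - 1 := by nlinarith [mul_pos hc₁ hL0]
    have h2 : lam * g₀ ≤ (L*d)*g₀ := by nlinarith
    nlinarith

/-- Let `M₁, c₀, c₁, g₀` be positive constants and `y ≠ 0` an element of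
a real Hilbert space `H`.  Then there exist `λ > 0` and a function `a ∈ C¹[0, ∞)` with
`a(t) > 0`, `a` strictly decreasing, `a(t) → 0` as `t → ∞`, and `|a′(t)| ≤ a(t)³/4`, such
that: (i) `M₁/‖y‖ ≤ λ`; (ii) `c₀(M₁ + a(t)) ≤ (λ/(2a(t)²))(a(t)² - 2|a′(t)|/a(t))`;
(iii) `c₁|a′(t)|/a(t) ≤ (a(t)²/(2λ))(a(t)² - 2|a′(t)|/a(t))`; and
(iv) `(λ/a(0)²)g₀ < 1`.  In particular, functions of the form `a(t) = d/(c+t)^b` with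
`0 < b ≤ 1/4`, `c ≥ 1` and `d` sufficiently large can be chosen. -/
theorem dsm_parameter_choice_continuous
    {H : Type*} [NormedAddCommGroup H] [InnerProductSpace ℝ H]
    (M₁ c₀ c₁ g₀ : ℝ) (hM₁ : 0 < M₁) (hc₀ : 0 < c₀) (hc₁ : 0 < c₁) (hg₀ : 0 < g₀)
    (y : H) (hy : y ≠ 0) :
    ∃ lam : ℝ, 0 < lam ∧ ∃ a : ℝ → ℝ,
      (∃ b c d : ℝ, 0 < b ∧ b ≤ 1 / 4 ∧ 1 ≤ c ∧ 0 < d ∧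
          ∀ t : ℝ, a t = d / (c + t) ^ b) ∧
      ContDiffOn ℝ 1 a (Ici (0 : ℝ)) ∧
      (∀ t ∈ Ici (0 : ℝ), 0 < a t) ∧
      StrictAntiOn a (Ici (0 : ℝ)) ∧
      Tendsto a atTop (𝓝 0) ∧
      (∀ t ∈ Ici (0 : ℝ), |deriv a t| ≤ a t ^ 3 / 4) ∧
      M₁ / ‖y‖ ≤ lam ∧
      (∀ t ∈ Ici (0 : ℝ),
        c₀ * (M₁ + a t) ≤ lam / (2 * a t ^ 2) * (a t ^ 2 - 2 * |deriv a t| / a t)) ∧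
      (∀ t ∈ Ici (0 : ℝ),
        c₁ * |deriv a t| / a t ≤ a t ^ 2 / (2 * lam) * (a t ^ 2 - 2 * |deriv a t| / a t)) ∧
      lam / a 0 ^ 2 * g₀ < 1 := by
  have hy' : (0:ℝ) < ‖y‖ := norm_pos_iff.mpr hy
  obtain ⟨lam, d, hlam0, hd1, hm, hineq2, hcl, hg4⟩ :=
    aux_choice (M₁/‖y‖) M₁ c₀ c₁ g₀ (by positivity) hM₁ hc₀ hc₁ hg₀
  have hd0 : (0:ℝ) < d := by linarith
  refine ⟨lam, hlam0, fun s => d / (1 + s) ^ (1/4 : ℝ),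
    ⟨1/4, 1, d, by norm_num, le_refl _, le_refl _, hd0, fun t => rfl⟩,
    ?_, ?_, ?_, ?_, ?_, hm, ?_, ?_, ?_⟩
  · -- ContDiffOn
    intro t ht
    have hv : (0:ℝ) < 1 + t := by simp only [mem_Ici] at ht; linarith
    have h1 : ContDiffAt ℝ 1 (fun s : ℝ => 1 + s) t := (contDiff_const.add contDiff_id).contDiffAt
    have h2 : ContDiffAt ℝ 1 (fun x : ℝ => x ^ (1/4:ℝ)) (1+t) :=
      Real.contDiffAt_rpow_const_of_ne hv.ne'
    exact (contDiffAt_const.div (h2.comp t h1) (Real.rpow_pos_of_pos hv _).ne').contDiffWithinAt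
  · -- positivity
    intro t ht
    have hv : (0:ℝ) < 1 + t := by simp only [mem_Ici] at ht; linarith
    exact div_pos hd0 (Real.rpow_pos_of_pos hv _)
  · -- strict anti
    intro s hs t ht hst
    simp only [mem_Ici] at hs ht
    exact div_lt_div_of_pos_left hd0 (Real.rpow_pos_of_pos (by linarith) _)
      (Real.rpow_lt_rpow (by linarith) (by linarith) (by norm_num))
  · -- tendsto
    have h1 : Tendsto (fun t:ℝ => 1+t) atTop atTop :=
      tendsto_atTop_add_const_left atTop 1 tendsto_id
    have h2 : Tendsto (fun t:ℝ => (1+t)^(1/4:ℝ)) atTop atTop :=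
      (tendsto_rpow_atTop (by norm_num)).comp h1
    exact Tendsto.div_atTop tendsto_const_nhds h2
  · -- derivative bound
    intro t ht
    simp only [mem_Ici] at ht
    have hv : (0:ℝ) < 1 + t := by linarith
    have hA1 : (1:ℝ) ≤ (1+t)^(1/4:ℝ) := Real.one_le_rpow (by linarith) (by norm_num)
    have hA5 : (1+t)^(5/4:ℝ) = ((1+t)^(1/4:ℝ))^5 := by
      rw [← Real.rpow_natCast ((1+t)^(1/4:ℝ)) 5, ← Real.rpow_mul hv.le]; norm_num
    have habs : |deriv (fun s : ℝ => d / (1 + s) ^ (1/4:ℝ)) t|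
        = d/(4*((1+t)^(1/4:ℝ))^5) := by
      rw [(aux_hasDeriv d t hv).deriv, hA5, abs_div, abs_neg,
        abs_of_pos (by positivity : (0:ℝ) < d/4), abs_of_pos (by positivity), div_div]
    rw [habs]
    exact auxL1 d _ hd1 hA1
  · -- inequality (ii)
    intro t ht
    simp only [mem_Ici] at ht
    have hv : (0:ℝ) < 1 + t := by linarith
    have hA1 : (1:ℝ) ≤ (1+t)^(1/4:ℝ) := Real.one_le_rpow (by linarith) (by norm_num)
    have hA5 : (1+t)^(5/4:ℝ) = ((1+t)^(1/4:ℝ))^5 := by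
      rw [← Real.rpow_natCast ((1+t)^(1/4:ℝ)) 5, ← Real.rpow_mul hv.le]; norm_num
    have habs : |deriv (fun s : ℝ => d / (1 + s) ^ (1/4:ℝ)) t|
        = d/(4*((1+t)^(1/4:ℝ))^5) := by
      rw [(aux_hasDeriv d t hv).deriv, hA5, abs_div, abs_neg,
        abs_of_pos (by positivity : (0:ℝ) < d/4), abs_of_pos (by positivity), div_div]
    rw [habs]
    have := auxL2 c₀ M₁ lam d ((1+t)^(1/4:ℝ)) hd1 hA1 hc₀ hlam0 hineq2
    convert this using 2 <;> ring
  · -- inequality (iii)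
    intro t ht
    simp only [mem_Ici] at ht
    have hv : (0:ℝ) < 1 + t := by linarith
    have hA1 : (1:ℝ) ≤ (1+t)^(1/4:ℝ) := Real.one_le_rpow (by linarith) (by norm_num)
    have hA5 : (1+t)^(5/4:ℝ) = ((1+t)^(1/4:ℝ))^5 := by
      rw [← Real.rpow_natCast ((1+t)^(1/4:ℝ)) 5, ← Real.rpow_mul hv.le]; norm_num
    have habs : |deriv (fun s : ℝ => d / (1 + s) ^ (1/4:ℝ)) t|
        = d/(4*((1+t)^(1/4:ℝ))^5) := by
      rw [(aux_hasDeriv d t hv).deriv, hA5, abs_div, abs_neg,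
        abs_of_pos (by positivity : (0:ℝ) < d/4), abs_of_pos (by positivity), div_div]
    rw [habs]
    have := auxL3 c₁ lam d ((1+t)^(1/4:ℝ)) hd1 hA1 hlam0 hcl
    convert this using 2 <;> ring
  · -- inequality (iv)
    have ha0 : (fun s : ℝ => d / (1 + s) ^ (1/4:ℝ)) 0 = d := by
      norm_num
    rw [ha0, div_mul_eq_mul_div, div_lt_one (by positivity)]
    exact hg4
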